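/- Let H be a self-adjoint operator bounded from below on L²(μ). If e^{−tH} is positivity improving for every t > 0 and inf spec(H) is an eigenvalue of H, then the ground state of H is unique (the eigenspace of inf spec(H) is one-dimensional). -/

import Mathlib

open MeasureTheory
open scoped InnerProductSpace

/-- If `‖T f‖ ≤ c ‖f‖` and `⟪f, T f⟫ ≥ c ‖f‖²` with `c > 0`, then `T f = c • f`. -/
lemma aux_eq_smul {E : Type*} [NormedAddCommGroup E] [InnerProductSpace ℝ E]
    (T : E →L[ℝ] E) (f : E) (c : ℝ) (hc : 0 < c)
    (h1 : ‖T f‖ ≤ c * ‖f‖) (h2 : c * ‖f‖ ^ 2 ≤ ⟪f, T f⟫_ℝ) : T f = c • f := by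
  have h3 : ‖T f - c • f‖ ^ 2 = ‖T f‖ ^ 2 - 2 * (c * ⟪f, T f⟫_ℝ) + c ^ 2 * ‖f‖ ^ 2 := by
    rw [norm_sub_sq_real, real_inner_smul_right, real_inner_comm (T f) f, norm_smul]
    simp [Real.norm_eq_abs, abs_of_pos hc, mul_pow]
  have h4 : ‖T f - c • f‖ ^ 2 ≤ 0 := by
    rw [h3]; nlinarith [sq_nonneg (‖T f‖ - c * ‖f‖), norm_nonneg (T f), norm_nonneg f]
  have h5 : T f - c • f = 0 :=
    norm_eq_zero.mp (le_antisymm (by nlinarith [norm_nonneg (T f - c • f)]) (norm_nonneg _))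
  exact sub_eq_zero.mp h5

set_option maxHeartbeats 1600000 in
/-- Uniqueness of the ground state for a self-adjoint operator `H` bounded from
below whose semigroup `S t = e^{-tH}` is positivity improving.  The (possibly
unbounded) operator `H` enters only through its semigroup `S`, its ground-state
energy `E₀ = inf spec H` (so `‖S t‖ = e^{-t E₀}`), and its lowest eigenspace
`G = ker (H - E₀)`, which coincides with the `e^{-t E₀}`-eigenspace of `S t`. -/
theorem ground_state_unique
    {X : Type*} [MeasurableSpace X] (μ : Measure X) [SigmaFinite μ]
    (S : ℝ → Lp ℝ 2 μ →L[ℝ] Lp ℝ 2 μ) (E₀ : ℝ)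
    (G : Submodule ℝ (Lp ℝ 2 μ))  -- the eigenspace of `H` at `E₀ = inf spec H`
    (hS_sa : ∀ t : ℝ, 0 < t → IsSelfAdjoint (S t))
    (hS_semigroup : ∀ t u : ℝ, 0 < t → 0 < u → (S t).comp (S u) = S (t + u))
    (hS_norm : ∀ t : ℝ, 0 < t → ‖S t‖ = Real.exp (-t * E₀))
    (hS_impr : ∀ t : ℝ, 0 < t → ∀ f : Lp ℝ 2 μ, 0 ≤ᵐ[μ] ⇑f → f ≠ 0 →
      ∀ᵐ x ∂μ, 0 < (S t f : X → ℝ) x)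
    (h_link : ∀ t : ℝ, 0 < t →
      G = Module.End.eigenspace ((S t).toLinearMap) (Real.exp (-t * E₀)))
    (h_eig : G ≠ ⊥) :
    ∃ g : Lp ℝ 2 μ, g ≠ 0 ∧ G = Submodule.span ℝ {g} := by
  classical
  set T := S 1 with hT_def
  set lam := Real.exp (-(1:ℝ) * E₀) with hlam_def
  have hlam : 0 < lam := Real.exp_pos _
  have hTnorm : ‖T‖ = lam := hS_norm 1 one_pos
  have hmem : ∀ f : Lp ℝ 2 μ, f ∈ G ↔ T f = lam • f := by
    intro f
    rw [h_link 1 one_pos]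
    exact Module.End.mem_eigenspace_iff
  -- nontriviality of the a.e. filter
  obtain ⟨g₀', hg₀'G, hg₀'ne⟩ := Submodule.exists_mem_ne_zero_of_ne_bot h_eig
  have hμ : μ ≠ 0 := by
    intro h
    apply hg₀'ne
    apply Lp.ext
    have hb : ae μ = ⊥ := ae_eq_bot.2 h
    rw [Filter.EventuallyEq, hb]
    exact Filter.eventually_bot
  haveI hne : (ae μ).NeBot := ae_neBot.2 hμ
  -- positivity preserving
  have hpres : ∀ f : Lp ℝ 2 μ, 0 ≤ᵐ[μ] ⇑f → 0 ≤ᵐ[μ] ⇑(T f) := by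
    intro f hf
    by_cases h0 : f = 0
    · subst h0
      rw [map_zero T]
      filter_upwards [Lp.coeFn_zero ℝ 2 μ] with x hx
      simp only [Pi.zero_apply] at hx ⊢
      rw [hx]
    · exact (hS_impr 1 one_pos f hf h0).mono fun x hx => hx.le
  -- |g| belongs to G whenever g does
  have habs : ∀ g : Lp ℝ 2 μ, g ∈ G → |g| ∈ G := by
    intro g hg
    have hTg : T g = lam • g := (hmem g).1 hg
    have ha : ⇑|g| =ᵐ[μ] fun x => |g x| := Lp.coeFn_abs g
    have h_nonneg : 0 ≤ᵐ[μ] ⇑|g| := by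
      filter_upwards [ha] with x hx
      rw [hx]; exact abs_nonneg _
    have h₁ : 0 ≤ᵐ[μ] ⇑(|g| - g) := by
      filter_upwards [Lp.coeFn_sub |g| g, ha] with x hx h2
      simp only [Pi.zero_apply]
      rw [hx]; simp only [Pi.sub_apply, h2]
      linarith [le_abs_self (g x)]
    have h₂ : 0 ≤ᵐ[μ] ⇑(|g| + g) := by
      filter_upwards [Lp.coeFn_add |g| g, ha] with x hx h2
      simp only [Pi.zero_apply]
      rw [hx]; simp only [Pi.add_apply, h2]
      linarith [neg_abs_le (g x)]
    have k₁ := hpres _ h₁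
    have k₂ := hpres _ h₂
    rw [map_sub, hTg] at k₁
    rw [map_add, hTg] at k₂
    have key : ∀ᵐ x ∂μ, lam * (|g| : Lp ℝ 2 μ) x ≤ (T |g|) x := by
      filter_upwards [k₁, k₂, Lp.coeFn_sub (T |g|) (lam • g), Lp.coeFn_add (T |g|) (lam • g),
        Lp.coeFn_smul lam g, ha] with x c1 c2 c3 c4 c5 c6
      rw [c3] at c1
      rw [c4] at c2
      simp only [Pi.sub_apply, Pi.add_apply, c5, Pi.smul_apply, smul_eq_mul,
        Pi.zero_apply] at c1 c2
      rw [c6]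
      rcases abs_cases (g x) with ⟨h, _⟩ | ⟨h, _⟩ <;> rw [h] <;> nlinarith
    have hInt1 : Integrable (fun x => (|g| : Lp ℝ 2 μ) x * (T |g|) x) μ := by
      simpa [mul_comm] using L2.integrable_inner (𝕜 := ℝ) |g| (T |g|)
    have hInt2 : Integrable (fun x => (|g| : Lp ℝ 2 μ) x * (|g| : Lp ℝ 2 μ) x) μ := by
      simpa [pow_two] using L2.integrable_inner (𝕜 := ℝ) |g| |g|
    have hinner : lam * ‖(|g| : Lp ℝ 2 μ)‖ ^ 2 ≤ ⟪(|g| : Lp ℝ 2 μ), T |g|⟫_ℝ := by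
      have e1 : ⟪(|g| : Lp ℝ 2 μ), T |g|⟫_ℝ = ∫ x, (|g| : Lp ℝ 2 μ) x * (T |g|) x ∂μ := by
        rw [L2.inner_def]; simp [mul_comm]
      have e2 : ⟪(|g| : Lp ℝ 2 μ), (|g| : Lp ℝ 2 μ)⟫_ℝ
          = ∫ x, (|g| : Lp ℝ 2 μ) x * (|g| : Lp ℝ 2 μ) x ∂μ := by
        rw [L2.inner_def]; simp [pow_two]
      have mono : ∫ x, lam * ((|g| : Lp ℝ 2 μ) x * (|g| : Lp ℝ 2 μ) x) ∂μ
          ≤ ∫ x, (|g| : Lp ℝ 2 μ) x * (T |g|) x ∂μ := by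
        apply integral_mono_ae (hInt2.const_mul lam) hInt1
        filter_upwards [key, h_nonneg] with x hx h2
        simp only [Pi.zero_apply] at h2
        nlinarith
      calc lam * ‖(|g| : Lp ℝ 2 μ)‖ ^ 2
          = lam * ⟪(|g| : Lp ℝ 2 μ), (|g| : Lp ℝ 2 μ)⟫_ℝ := by rw [real_inner_self_eq_norm_sq]
        _ = ∫ x, lam * ((|g| : Lp ℝ 2 μ) x * (|g| : Lp ℝ 2 μ) x) ∂μ := by
            rw [e2, integral_const_mul]
        _ ≤ ∫ x, (|g| : Lp ℝ 2 μ) x * (T |g|) x ∂μ := mono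
        _ = ⟪(|g| : Lp ℝ 2 μ), T |g|⟫_ℝ := e1.symm
    have hnormT : ‖T |g|‖ ≤ lam * ‖(|g| : Lp ℝ 2 μ)‖ := by
      rw [← hTnorm]; exact T.le_opNorm _
    exact (hmem _).2 (aux_eq_smul T |g| lam hlam hnormT hinner)
  -- nonzero nonneg elements of G are a.e. strictly positive
  have hstrict : ∀ f : Lp ℝ 2 μ, f ∈ G → f ≠ 0 → 0 ≤ᵐ[μ] ⇑f → ∀ᵐ x ∂μ, 0 < f x := by
    intro f hf hfne hfnn
    have h1 := hS_impr 1 one_pos f hfnn hfne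
    rw [(hmem f).1 hf] at h1
    filter_upwards [h1, Lp.coeFn_smul lam f] with x hx h2
    rw [h2] at hx
    simp only [Pi.smul_apply, smul_eq_mul] at hx
    nlinarith
  -- |g| is a.e. strictly positive for nonzero g ∈ G
  have habs_ne : ∀ g : Lp ℝ 2 μ, g ≠ 0 → |g| ≠ 0 := by
    intro g hgne h
    apply hgne
    apply Lp.ext
    have h0 : ⇑|g| =ᵐ[μ] ⇑(0 : Lp ℝ 2 μ) := by rw [h]
    filter_upwards [Lp.coeFn_abs g, h0, Lp.coeFn_zero ℝ 2 μ] with x h1 h2 h3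
    rw [h2, h3] at h1
    have : |g x| = 0 := h1.symm
    rw [h3]
    exact abs_eq_zero.mp this
  have habs_pos : ∀ g : Lp ℝ 2 μ, g ∈ G → g ≠ 0 → ∀ᵐ x ∂μ, 0 < |g x| := by
    intro g hg hgne
    have h_nonneg : 0 ≤ᵐ[μ] ⇑|g| := by
      filter_upwards [Lp.coeFn_abs g] with x hx
      rw [hx]; exact abs_nonneg _
    have := hstrict |g| (habs g hg) (habs_ne g hgne) h_nonneg
    filter_upwards [this, Lp.coeFn_abs g] with x h1 h2
    rw [h2] at h1
    exact h1
  -- sign dichotomy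
  have hsign : ∀ g : Lp ℝ 2 μ, g ∈ G → g ≠ 0 →
      (∀ᵐ x ∂μ, 0 < g x) ∨ (∀ᵐ x ∂μ, g x < 0) := by
    intro g hg hgne
    have hag := habs_pos g hg hgne
    set p : Lp ℝ 2 μ := (2⁻¹ : ℝ) • (g + |g|) with hp_def
    set n : Lp ℝ 2 μ := (2⁻¹ : ℝ) • (|g| - g) with hn_def
    have hpG : p ∈ G := G.smul_mem _ (G.add_mem hg (habs g hg))
    have hnG : n ∈ G := G.smul_mem _ (G.sub_mem (habs g hg) hg)
    have hpae : ⇑p =ᵐ[μ] fun x => 2⁻¹ * (g x + |g x|) := by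
      filter_upwards [Lp.coeFn_smul (2⁻¹ : ℝ) (g + |g|), Lp.coeFn_add g |g|,
        Lp.coeFn_abs g] with x h1 h2 h3
      rw [h1]
      simp only [Pi.smul_apply, smul_eq_mul, h2, Pi.add_apply, h3]
    have hnae : ⇑n =ᵐ[μ] fun x => 2⁻¹ * (|g x| - g x) := by
      filter_upwards [Lp.coeFn_smul (2⁻¹ : ℝ) (|g| - g), Lp.coeFn_sub |g| g,
        Lp.coeFn_abs g] with x h1 h2 h3
      rw [h1]
      simp only [Pi.smul_apply, smul_eq_mul, h2, Pi.sub_apply, h3]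
    have hp_nonneg : 0 ≤ᵐ[μ] ⇑p := by
      filter_upwards [hpae] with x hx
      simp only [Pi.zero_apply]
      rw [hx]
      have := neg_abs_le (g x)
      nlinarith
    have hn_nonneg : 0 ≤ᵐ[μ] ⇑n := by
      filter_upwards [hnae] with x hx
      simp only [Pi.zero_apply]
      rw [hx]
      have := le_abs_self (g x)
      nlinarith
    by_cases hp0 : p = 0
    · right
      have h0 : ⇑p =ᵐ[μ] ⇑(0 : Lp ℝ 2 μ) := by rw [hp0]
      filter_upwards [hpae, h0, Lp.coeFn_zero ℝ 2 μ, hag] with x h1 h2 h3 h4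
      rw [h2, h3] at h1
      simp only [Pi.zero_apply] at h1
      have hgx : g x = -|g x| := by linarith
      linarith
    by_cases hn0 : n = 0
    · left
      have h0 : ⇑n =ᵐ[μ] ⇑(0 : Lp ℝ 2 μ) := by rw [hn0]
      filter_upwards [hnae, h0, Lp.coeFn_zero ℝ 2 μ, hag] with x h1 h2 h3 h4
      rw [h2, h3] at h1
      simp only [Pi.zero_apply] at h1
      have hgx : g x = |g x| := by linarith
      linarith
    · exfalso
      have hppos := hstrict p hpG hp0 hp_nonneg
      have hnpos := hstrict n hnG hn0 hn_nonneg
      have hfalse : ∀ᵐ _x ∂μ, False := by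
        filter_upwards [hppos, hnpos, hpae, hnae] with x h1 h2 h3 h4
        rw [h3] at h1
        rw [h4] at h2
        rcases le_or_gt 0 (g x) with h | h
        · rw [abs_of_nonneg h] at h2; linarith
        · rw [abs_of_neg h] at h1; linarith
      exact hfalse.exists.elim fun _ hx => hx
  -- the generator
  set g₀ : Lp ℝ 2 μ := |g₀'| with hg₀_def
  have hg₀G : g₀ ∈ G := habs g₀' hg₀'G
  have hg₀ne : g₀ ≠ 0 := habs_ne g₀' hg₀'ne
  have hg₀pos : ∀ᵐ x ∂μ, 0 < g₀ x := by
    have := habs_pos g₀' hg₀'G hg₀'ne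
    filter_upwards [this, Lp.coeFn_abs g₀'] with x h1 h2
    rw [hg₀_def, h2]
    exact h1
  refine ⟨g₀, hg₀ne, le_antisymm ?_ ?_⟩
  · -- G ≤ span ℝ {g₀}
    intro g hg
    set c : ℝ := ⟪g, g₀⟫_ℝ / ‖g₀‖ ^ 2 with hc_def
    set f : Lp ℝ 2 μ := g - c • g₀ with hf_def
    have hfG : f ∈ G := G.sub_mem hg (G.smul_mem c hg₀G)
    have hg₀norm : ‖g₀‖ ≠ 0 := norm_ne_zero_iff.2 hg₀ne
    have horth : ⟪f, g₀⟫_ℝ = 0 := by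
      rw [hf_def, inner_sub_left, real_inner_smul_left, real_inner_self_eq_norm_sq, hc_def]
      field_simp
      simp
    have hIproduct : ∀ u : Lp ℝ 2 μ, (∀ᵐ x ∂μ, 0 < u x * g₀ x) → 0 < ⟪u, g₀⟫_ℝ := by
      intro u hu
      have e1 : ⟪u, g₀⟫_ℝ = ∫ x, u x * g₀ x ∂μ := by rw [L2.inner_def]; simp [mul_comm]
      have hInt : Integrable (fun x => u x * g₀ x) μ := by
        simpa [mul_comm] using L2.integrable_inner (𝕜 := ℝ) u g₀
      rw [e1]
      rcases lt_or_eq_of_le (integral_nonneg_of_ae (hu.mono fun x hx => hx.le)) with h | h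
      · exact h
      · exfalso
        have := (integral_eq_zero_iff_of_nonneg_ae (hu.mono fun x hx => hx.le) hInt).1 h.symm
        have hff : ∀ᵐ _x ∂μ, False := by
          filter_upwards [hu, this] with x h1 h2
          rw [h2] at h1
          exact lt_irrefl 0 h1
        exact hff.exists.elim fun _ hx => hx
    by_cases hf0 : f = 0
    · have : g = c • g₀ := by
        have := sub_eq_zero.mp hf0
        exact this
      rw [this]
      exact Submodule.mem_span_singleton.2 ⟨c, rfl⟩
    · exfalso
      rcases hsign f hfG hf0 with hpos | hneg
      · have := hIproduct f (by
          filter_upwards [hpos, hg₀pos] with x h1 h2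
          positivity)
        rw [horth] at this
        exact lt_irrefl 0 this
      · have h1 := hIproduct (-f) (by
          filter_upwards [hneg, hg₀pos, Lp.coeFn_neg f] with x h1 h2 h3
          rw [h3]
          simp only [Pi.neg_apply]
          nlinarith)
        have h2 : ⟪-f, g₀⟫_ℝ = 0 := by rw [inner_neg_left, horth, neg_zero]
        rw [h2] at h1
        exact lt_irrefl 0 h1
  · -- span ℝ {g₀} ≤ G
    rw [Submodule.span_le]
    simpa using hg₀G
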